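/- Let Q be a subset of a topological space X. If for every topological space Z and every open set W ⊆ Z × X, the set {z ∈ Z | {z} × Q ⊆ W} is open in Z, then Q is compact. -/

import Mathlib

universe u

theorem stmt5 {X : Type u} [TopologicalSpace X] (Q : Set X)
    (h : ∀ (Z : Type u) [TopologicalSpace Z] (W : Set (Z × X)), IsOpen W →
      IsOpen {z : Z | ∀ q ∈ Q, (z, q) ∈ W}) :
    IsCompact Q := by
  rw [isCompact_iff_ultrafilter_le_nhds]
  intro f hfQ
  by_contra hcon
  push_neg at hcon
  -- for each a ∈ Q, pick an open U ∋ a with Uᶜ ∈ f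
  have key : ∀ a ∈ Q, ∃ U : Set X, IsOpen U ∧ a ∈ U ∧ Uᶜ ∈ f := by
    intro a ha
    have := hcon a ha
    rw [le_nhds_iff] at this
    push_neg at this
    obtain ⟨U, haU, hUopen, hUf⟩ := this
    exact ⟨U, hUopen, haU, Ultrafilter.compl_mem_iff_notMem.2 hUf⟩
  choose! U hUopen hmemU hUc using key
  -- topology on Option X: nbhds of none are sets of f
  letI t : TopologicalSpace (Option X) :=
    { IsOpen := fun S => none ∈ S → (some ⁻¹' S) ∈ f
      isOpen_univ := fun _ => Filter.univ_mem
      isOpen_inter := fun s u hs hu hmem =>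
        Filter.inter_mem (hs hmem.1) (hu hmem.2)
      isOpen_sUnion := fun S hS hmem => by
        obtain ⟨t, htS, hnt⟩ := hmem
        exact Filter.mem_of_superset (hS t htS hnt)
          (fun y hy => ⟨t, htS, hy⟩) }
  set W : Set (Option X × X) :=
    ⋃ x ∈ Q, (insert none (some '' (U x)ᶜ)) ×ˢ U x with hW
  have hWopen : IsOpen W := by
    refine isOpen_biUnion fun x hx => IsOpen.prod ?_ (hUopen x hx)
    intro _
    have : some ⁻¹' (insert (none : Option X) (some '' (U x)ᶜ)) = (U x)ᶜ := by
      ext y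
      simp [Option.some_injective X |>.mem_set_image]
    rw [this]
    exact hUc x hx
  have hSopen := h (Option X) W hWopen
  have hnone : (none : Option X) ∈ {z : Option X | ∀ q ∈ Q, (z, q) ∈ W} := by
    intro q hq
    exact Set.mem_biUnion hq ⟨Set.mem_insert _ _, hmemU q hq⟩
  have hTf : (some ⁻¹' {z : Option X | ∀ q ∈ Q, (z, q) ∈ W}) ∈ f := hSopen hnone
  have hQf : Q ∈ f := by
    simpa [Filter.le_principal_iff] using hfQ
  obtain ⟨y, hyT, hyQ⟩ := Filter.nonempty_of_mem (Filter.inter_mem hTf hQf)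
  have := hyT y hyQ
  simp only [hW, Set.mem_iUnion, Set.mem_prod] at this
  obtain ⟨x, hxQ, hins, hyU⟩ := this
  rcases hins with h1 | h2
  · exact Option.some_ne_none y h1
  · obtain ⟨y', hy', hyy'⟩ := h2
    cases Option.some_injective X hyy'
    exact hy' hyU
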